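/- The map Ψ(x,y,z) = (z, x+y, xy) from 𝓛 = {(x,y,z) : |x|<1, |y|<1, 2|z| < |1 − x conj(y)| + √((1−|x|²)(1−|y|²))} onto the pentablock 𝒫 is a proper holomorphic map of multiplicity two, with Jacobian determinant x − y, a homogeneous polynomial of degree 1. -/

import Mathlib

open Complex ComplexConjugate

noncomputable section

/-- The circular domain `𝓛` covering the pentablock. -/
def Ldom : Set (ℂ × ℂ × ℂ) :=
  {p | ‖p.1‖ < 1 ∧ ‖p.2.1‖ < 1 ∧
    2 * ‖p.2.2‖ < ‖1 - p.1 * conj p.2.1‖ +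
      Real.sqrt ((1 - ‖p.1‖ ^ 2) * (1 - ‖p.2.1‖ ^ 2))}

/-- The pentablock `𝒫 = {(a₂₁, tr A, det A) : ‖A‖ < 1}`. -/
def Pentablock : Set (ℂ × ℂ × ℂ) :=
  {x | ∃ A : Matrix (Fin 2) (Fin 2) ℂ, ‖Matrix.toEuclideanCLM (𝕜 := ℂ) A‖ < 1 ∧
    x = (A 1 0, A.trace, A.det)}

/-- The covering map `Ψ(x,y,z) = (z, x + y, x y)`. -/
def PsiMap : ℂ × ℂ × ℂ → ℂ × ℂ × ℂ := fun p => (p.2.2, p.1 + p.2.1, p.1 * p.2.1)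

/-! ### Auxiliary lemmas -/

namespace Stmt15Aux

/-! #### The operator norm criterion -/

private lemma euclid_normSq (v : EuclideanSpace ℂ (Fin 2)) :
    ‖v‖ ^ 2 = normSq (v 0) + normSq (v 1) := by
  rw [EuclideanSpace.norm_eq, Real.sq_sqrt (by positivity)]
  simp [Fin.sum_univ_two, Complex.sq_norm]

private lemma clm_apply (A : Matrix (Fin 2) (Fin 2) ℂ) (v : EuclideanSpace ℂ (Fin 2)) (i : Fin 2) :
    (Matrix.toEuclideanCLM (𝕜 := ℂ) A) v i = A i 0 * v 0 + A i 1 * v 1 := by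
  have h := congrFun (Matrix.ofLp_toEuclideanCLM A v) i
  simpa [Matrix.toLin'_apply, Matrix.mulVec, dotProduct, Fin.sum_univ_two] using h

private lemma opnorm_lt_one_iff (A : Matrix (Fin 2) (Fin 2) ℂ) :
    ‖Matrix.toEuclideanCLM (𝕜 := ℂ) A‖ < 1 ↔
      ∀ v : EuclideanSpace ℂ (Fin 2), v ≠ 0 →
        ‖(Matrix.toEuclideanCLM (𝕜 := ℂ) A) v‖ < ‖v‖ := by
  set f := Matrix.toEuclideanCLM (𝕜 := ℂ) A with hf
  constructor
  · intro h v hv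
    calc ‖f v‖ ≤ ‖f‖ * ‖v‖ := f.le_opNorm v
    _ < 1 * ‖v‖ := by
        have : (0:ℝ) < ‖v‖ := norm_pos_iff.mpr hv
        exact mul_lt_mul_of_pos_right h this
    _ = ‖v‖ := one_mul _
  · intro h
    obtain ⟨v₀, hv₀, hmax⟩ := (isCompact_sphere (0 : EuclideanSpace ℂ (Fin 2)) 1).exists_isMaxOn
      (NormedSpace.sphere_nonempty.mpr zero_le_one)
      ((f.continuous.norm).continuousOn)
    have hn : ‖v₀‖ = 1 := by simpa using mem_sphere_zero_iff_norm.mp hv₀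
    have hlt : ‖f v₀‖ < 1 := by
      have := h v₀ (by intro h0; rw [h0] at hn; simp at hn)
      rwa [hn] at this
    refine lt_of_le_of_lt (f.opNorm_le_bound (norm_nonneg _) ?_) hlt
    intro v
    rcases eq_or_ne v 0 with rfl | hv
    · simp
    · have hvn : (0:ℝ) < ‖v‖ := norm_pos_iff.mpr hv
      have hmem : (((‖v‖⁻¹ : ℝ) : ℂ) • v) ∈ Metric.sphere (0 : EuclideanSpace ℂ (Fin 2)) 1 := by
        simp [norm_smul, abs_of_pos (inv_pos.mpr hvn), inv_mul_cancel₀ hvn.ne']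
      have hle := hmax hmem
      have h2 : ‖f ((((‖v‖⁻¹ : ℝ)) : ℂ) • v)‖ = ‖v‖⁻¹ * ‖f v‖ := by
        rw [map_smul, norm_smul]; simp [abs_of_pos (inv_pos.mpr hvn)]
      have hle' : ‖v‖⁻¹ * ‖f v‖ ≤ ‖f v₀‖ := by rw [← h2]; exact hle
      calc ‖f v‖ = ‖v‖ * (‖v‖⁻¹ * ‖f v‖) := by field_simp
      _ ≤ ‖v‖ * ‖f v₀‖ := by exact mul_le_mul_of_nonneg_left hle' hvn.le
      _ = ‖f v₀‖ * ‖v‖ := mul_comm _ _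

private lemma opnorm_lt_one_iff' (A : Matrix (Fin 2) (Fin 2) ℂ) :
    ‖Matrix.toEuclideanCLM (𝕜 := ℂ) A‖ < 1 ↔
      ∀ v : Fin 2 → ℂ, v ≠ 0 →
        normSq (A 0 0 * v 0 + A 0 1 * v 1) + normSq (A 1 0 * v 0 + A 1 1 * v 1)
          < normSq (v 0) + normSq (v 1) := by
  rw [opnorm_lt_one_iff]
  have key : ∀ v : EuclideanSpace ℂ (Fin 2),
      (‖(Matrix.toEuclideanCLM (𝕜 := ℂ) A) v‖ < ‖v‖ ↔
        normSq (A 0 0 * v 0 + A 0 1 * v 1) + normSq (A 1 0 * v 0 + A 1 1 * v 1)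
          < normSq (v 0) + normSq (v 1)) := by
    intro v
    constructor
    · intro h
      have := pow_lt_pow_left₀ h (norm_nonneg _) two_ne_zero
      rwa [euclid_normSq, euclid_normSq, clm_apply, clm_apply] at this
    · intro h
      refine lt_of_pow_lt_pow_left₀ 2 (norm_nonneg _) ?_
      rwa [euclid_normSq, euclid_normSq, clm_apply, clm_apply]
  constructor
  · intro h v hv
    have hv' : (WithLp.toLp 2 v) ≠ 0 := by simpa using hv
    exact (key _).mp (h _ hv')
  · intro h v hv
    exact (key v).mpr (h v (by simpa using hv))

/-! #### Algebraic identities -/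

private lemma lagrange (a b c d : ℂ) :
    (normSq a + normSq c) * (normSq b + normSq d)
      = normSq (a*d - b*c) + normSq (conj a * b + conj c * d) := by
  simp only [Complex.normSq_apply, Complex.add_re, Complex.add_im, Complex.mul_re,
    Complex.mul_im, Complex.sub_re, Complex.sub_im, Complex.conj_re, Complex.conj_im]
  ring

private lemma complete_sq (a b c d v0 v1 : ℂ) :
    (1 - normSq a - normSq c) *
        ((normSq v0 + normSq v1) - (normSq (a*v0 + b*v1) + normSq (c*v0 + d*v1)))
      = normSq (((1 - normSq a - normSq c : ℝ) : ℂ) * v0 - (conj a * b + conj c * d) * v1)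
        + ((1 - normSq a - normSq c) * (1 - normSq b - normSq d)
            - normSq (conj a * b + conj c * d)) * normSq v1 := by
  simp only [Complex.normSq_apply, Complex.add_re, Complex.add_im, Complex.mul_re,
    Complex.mul_im, Complex.sub_re, Complex.sub_im, Complex.conj_re, Complex.conj_im,
    Complex.ofReal_re, Complex.ofReal_im]
  ring

private lemma par_law (u w : ℂ) :
    normSq (u + w) + normSq (u - w) = 2 * normSq u + 2 * normSq w := by
  simp only [Complex.normSq_apply, Complex.add_re, Complex.add_im, Complex.sub_re,
    Complex.sub_im]
  ring

private lemma oneSub_mul_conj (x y : ℂ) :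
    normSq (1 - x * conj y) = (1 - normSq x) * (1 - normSq y) + normSq (x - y) := by
  simp only [Complex.normSq_apply, Complex.add_re, Complex.add_im, Complex.mul_re,
    Complex.mul_im, Complex.sub_re, Complex.sub_im, Complex.conj_re, Complex.conj_im,
    Complex.one_re, Complex.one_im]
  ring

/-! #### The quadratic-form criterion -/

private lemma quad_to_ineqs (a b c d : ℂ)
    (h : ∀ v : Fin 2 → ℂ, v ≠ 0 →
      normSq (a * v 0 + b * v 1) + normSq (c * v 0 + d * v 1)
        < normSq (v 0) + normSq (v 1)) :
    normSq (a*d - b*c) < 1 ∧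
      normSq a + normSq b + normSq c + normSq d < 1 + normSq (a*d - b*c) := by
  have h1 : normSq a + normSq c < 1 := by
    have := h ![1, 0] (by
      intro h0; have := congrFun h0 0; simp at this)
    simpa using this
  have h2 : normSq b + normSq d < 1 := by
    have := h ![0, 1] (by
      intro h0; have := congrFun h0 1; simp at this)
    simpa using this
  have hdet : normSq (a*d - b*c) < 1 := by
    have hL := lagrange a b c d
    nlinarith [normSq_nonneg (conj a * b + conj c * d), normSq_nonneg a, normSq_nonneg b,
      normSq_nonneg c, normSq_nonneg d, normSq_nonneg (a*d-b*c)]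
  refine ⟨hdet, ?_⟩
  set μ : ℂ := conj a * b + conj c * d with hμ
  set m : ℝ := 1 - normSq a - normSq c with hm
  have hmpos : 0 < m := by linarith [normSq_nonneg a, normSq_nonneg c]
  have hv : (![μ, (m:ℂ)] : Fin 2 → ℂ) ≠ 0 := by
    intro h0
    have := congrFun h0 1
    simp at this
    exact hmpos.ne' (by exact_mod_cast this)
  have h3 := h ![μ, (m:ℂ)] hv
  simp only [Matrix.cons_val_zero, Matrix.cons_val_one, Matrix.head_cons] at h3
  have hq : 0 < (normSq μ + normSq ((m:ℂ)))
      - (normSq (a*μ + b*(m:ℂ)) + normSq (c*μ + d*(m:ℂ))) := by linarith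
  have hcs := complete_sq a b c d μ (m:ℂ)
  rw [← hμ, ← hm] at hcs
  have hzero : ((m : ℂ) * μ - μ * (m:ℂ)) = 0 := by ring
  rw [hzero] at hcs
  simp only [normSq_zero, zero_add] at hcs
  have hm2 : normSq ((m:ℂ)) = m * m := by simp [Complex.normSq_apply]
  rw [hm2] at hcs
  have hdM : 0 < m * (1 - normSq b - normSq d) - normSq μ := by
    have hmq : 0 < m * ((normSq μ + m*m) - (normSq (a*μ + b*(m:ℂ)) + normSq (c*μ + d*(m:ℂ)))) := by
      apply mul_pos hmpos
      rw [hm2] at hq; linarith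
    rw [hcs] at hmq
    by_contra hX
    push_neg at hX
    nlinarith [hmq, mul_pos hmpos hmpos]
  have hL := lagrange a b c d
  rw [← hμ] at hL
  nlinarith [normSq_nonneg μ]

private lemma ineqs_to_quad (a b c d : ℂ)
    (h1 : normSq (a*d - b*c) < 1)
    (h2 : normSq a + normSq b + normSq c + normSq d < 1 + normSq (a*d - b*c)) :
    ∀ v : Fin 2 → ℂ, v ≠ 0 →
      normSq (a * v 0 + b * v 1) + normSq (c * v 0 + d * v 1)
        < normSq (v 0) + normSq (v 1) := by
  have hL := lagrange a b c d
  have hm : 0 < 1 - normSq a - normSq c := by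
    nlinarith [normSq_nonneg a, normSq_nonneg b, normSq_nonneg c, normSq_nonneg d,
      normSq_nonneg (conj a * b + conj c * d), normSq_nonneg (a*d - b*c)]
  have hdM : 0 < (1 - normSq a - normSq c) * (1 - normSq b - normSq d)
      - normSq (conj a * b + conj c * d) := by nlinarith
  intro v hv
  have hcs := complete_sq a b c d (v 0) (v 1)
  rcases eq_or_ne (v 1) 0 with h10 | h10
  · have h00 : v 0 ≠ 0 := by
      intro h00
      apply hv; funext i; fin_cases i
      · exact h00
      · exact h10
    rw [h10] at hcs ⊢
    have hpos : 0 < normSq (((1 - normSq a - normSq c : ℝ) : ℂ) * v 0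
        - (conj a * b + conj c * d) * 0) := by
      rw [mul_zero, sub_zero]
      apply normSq_pos.mpr
      exact mul_ne_zero (by exact_mod_cast hm.ne') h00
    simp only [normSq_zero] at hcs ⊢
    nlinarith
  · have hpos1 : 0 < normSq (v 1) := normSq_pos.mpr h10
    nlinarith [normSq_nonneg (((1 - normSq a - normSq c : ℝ) : ℂ) * v 0
      - (conj a * b + conj c * d) * v 1), mul_pos hdM hpos1]

/-! #### Construction of a matrix realizing a point of `𝓛` -/

private lemma build_matrix (α β z δ : ℂ) (p : ℂ) (hdet : α * δ - β * z = p)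
    (h1 : normSq p < 1)
    (h2 : normSq α + normSq β + normSq z + normSq δ < 1 + normSq p) :
    ∃ A : Matrix (Fin 2) (Fin 2) ℂ, ‖Matrix.toEuclideanCLM (𝕜 := ℂ) A‖ < 1 ∧
      A 1 0 = z ∧ A.trace = α + δ ∧ A.det = p := by
  refine ⟨!![α, β; z, δ], ?_, by simp, ?_, ?_⟩
  · rw [opnorm_lt_one_iff']
    have := ineqs_to_quad α β z δ (by rwa [hdet]) (by rwa [hdet])
    simpa using this
  · simp [Matrix.trace_fin_two_of]
  · rw [Matrix.det_fin_two_of, hdet]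

private lemma real_ineq (t D2 D N sD m : ℝ) (ht0 : 0 < t) (hD20 : 0 ≤ D2) (hcase : D2 < t)
    (hDpos : 0 < D) (hsD2 : sD^2 = D) (hsD0 : 0 ≤ sD) (hN0 : 0 ≤ N) (hm0 : 0 ≤ m)
    (htm : t = m^2) (hN2 : N^2 = D + 4*D2) (hz2 : 2*m < N + sD) :
    D2^2/t + t < D + 2*D2 := by
  have hmpos : 0 < m := by nlinarith
  have hNsD : sD ≤ N := by nlinarith
  have f1 : 0 < (N + sD)^2 - 4 * t := by nlinarith
  have f2 : 0 < 4 * t - (N - sD)^2 := by nlinarith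
  have hkey : t^2 - t * (D + 2 * D2) + D2^2 < 0 := by nlinarith [mul_pos f1 f2]
  have hfrac : D2^2/t < D + 2*D2 - t := by
    rw [div_lt_iff₀ ht0]; nlinarith [hkey]
  linarith

private lemma mem_penta_of_Ldom {x y z : ℂ} (hx : ‖x‖ < 1) (hy : ‖y‖ < 1)
    (hz : 2 * ‖z‖ < ‖1 - x * conj y‖ +
      Real.sqrt ((1 - ‖x‖ ^ 2) * (1 - ‖y‖ ^ 2))) :
    ∃ A : Matrix (Fin 2) (Fin 2) ℂ, ‖Matrix.toEuclideanCLM (𝕜 := ℂ) A‖ < 1 ∧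
      A 1 0 = z ∧ A.trace = x + y ∧ A.det = x * y := by
  have hnx : normSq x < 1 := by rw [← Complex.sq_norm]; nlinarith [norm_nonneg x]
  have hny : normSq y < 1 := by rw [← Complex.sq_norm]; nlinarith [norm_nonneg y]
  have hnx0 : 0 ≤ normSq x := normSq_nonneg x
  have hny0 : 0 ≤ normSq y := normSq_nonneg y
  have hp1 : normSq (x * y) < 1 := by rw [normSq_mul]; nlinarith
  have hpar : normSq x + normSq y
      = 2 * normSq ((x + y)/2) + 2 * normSq ((x - y)/2) := by
    have h := par_law ((x + y)/2) ((x - y)/2)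
    have e1 : (x + y)/2 + (x - y)/2 = x := by ring
    have e2 : (x + y)/2 - (x - y)/2 = y := by ring
    rw [e1, e2] at h
    linarith
  rcases eq_or_ne z 0 with rfl | hz0
  · refine build_matrix x 0 0 y (x*y) (by ring) hp1 ?_
    simp only [normSq_zero, normSq_mul]
    nlinarith
  · have ht0 : 0 < normSq z := normSq_pos.mpr hz0
    set t := normSq z with htdef
    set K2 := normSq ((x - y)/2) with hK2def
    have hK20 : 0 ≤ K2 := by rw [hK2def]; exact normSq_nonneg _
    rcases le_or_gt t K2 with hcase | hcase
    · -- small |z|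
      have hK2pos : 0 < K2 := lt_of_lt_of_le ht0 hcase
      set c : ℝ := Real.sqrt (1 - t/K2) with hc
      have hc20 : 0 ≤ 1 - t/K2 := by
        rw [sub_nonneg, div_le_one hK2pos]; exact hcase
      have hc2 : c^2 = 1 - t/K2 := Real.sq_sqrt hc20
      have hαδ : ((x+y)/2 + (c:ℂ) * ((x - y)/2)) * ((x+y)/2 - (c:ℂ) * ((x - y)/2)) - x * y
          = ((t/K2 : ℝ) : ℂ) * ((x - y)/2)^2 := by
        have h2 : ((c:ℂ))^2 = ((1 - t/K2 : ℝ) : ℂ) := by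
          rw [← hc2]; push_cast; ring
        calc ((x+y)/2 + (c:ℂ) * ((x - y)/2)) * ((x+y)/2 - (c:ℂ) * ((x - y)/2)) - x * y
            = ((x - y)/2)^2 - ((c:ℂ))^2 * ((x - y)/2)^2 := by ring
        _ = ((x - y)/2)^2 - ((1 - t/K2 : ℝ) : ℂ) * ((x - y)/2)^2 := by rw [h2]
        _ = ((t/K2 : ℝ) : ℂ) * ((x - y)/2)^2 := by push_cast; ring
      set α : ℂ := (x+y)/2 + (c:ℂ) * ((x - y)/2) with hα
      set δ : ℂ := (x+y)/2 - (c:ℂ) * ((x - y)/2) with hδ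
      set β : ℂ := (α * δ - x * y) / z with hβ
      have hdet : α * δ - β * z = x * y := by
        rw [hβ, div_mul_cancel₀ _ hz0]; ring
      have htr : α + δ = x + y := by rw [hα, hδ]; ring
      have hnβ : normSq β = t := by
        rw [hβ, normSq_div, hαδ, normSq_mul, normSq_ofReal,
          show ((x-y)/2)^2 = ((x-y)/2) * ((x-y)/2) by ring, normSq_mul, ← hK2def, ← htdef]
        field_simp
      have hnαδ : normSq α + normSq δ
          = 2 * normSq ((x+y)/2) + 2 * ((1 - t/K2) * K2) := by
        have h := par_law ((x+y)/2) ((c:ℂ) * ((x - y)/2))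
        rw [← hα, ← hδ] at h
        rw [h, normSq_mul, normSq_ofReal, ← hK2def]
        have : c * c = 1 - t/K2 := by rw [← hc2]; ring
        rw [this]
      have hD2t : (1 - t/K2) * K2 = K2 - t := by field_simp
      rw [← htr]
      refine build_matrix α β z δ (x*y) hdet hp1 ?_
      rw [normSq_mul, ← htdef, hnβ]
      rw [hD2t] at hnαδ
      nlinarith [hnαδ, hpar]
    · -- large |z|
      have hαα : ((x+y)/2) * ((x+y)/2) - x * y = ((x - y)/2)^2 := by ring
      set α : ℂ := (x+y)/2 with hα
      set β : ℂ := (α * α - x * y) / z with hβ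
      have hdet : α * α - β * z = x * y := by
        rw [hβ, div_mul_cancel₀ _ hz0]; ring
      have htr : α + α = x + y := by rw [hα]; ring
      have hnβ : normSq β = K2^2 / t := by
        rw [hβ, normSq_div, hαα,
          show ((x-y)/2)^2 = ((x-y)/2) * ((x-y)/2) by ring, normSq_mul, ← hK2def, ← htdef]
        ring
      have hDpos : 0 < (1 - normSq x) * (1 - normSq y) := by nlinarith
      have hkey : K2^2 / t + t < (1 - normSq x) * (1 - normSq y) + 2 * K2 := by
        apply real_ineq t K2 ((1 - normSq x) * (1 - normSq y))
          (‖1 - x * conj y‖)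
          (Real.sqrt ((1 - ‖x‖ ^ 2) * (1 - ‖y‖ ^ 2))) (‖z‖)
          ht0 hK20 hcase hDpos ?_ (Real.sqrt_nonneg _)
          (norm_nonneg _) (norm_nonneg _) ?_ ?_ hz
        · have e1 : 0 ≤ 1 - ‖x‖ ^ 2 := by nlinarith [norm_nonneg x]
          have e2 : 0 ≤ 1 - ‖y‖ ^ 2 := by nlinarith [norm_nonneg y]
          rw [Real.sq_sqrt (mul_nonneg e1 e2), Complex.sq_norm, Complex.sq_norm]
        · rw [htdef, Complex.sq_norm]
        · rw [Complex.sq_norm, oneSub_mul_conj]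
          have h4 : normSq (x - y) = 4 * normSq ((x-y)/2) := by
            rw [show x - y = (2:ℂ) * ((x-y)/2) by ring, normSq_mul]
            norm_num
          rw [h4, ← hK2def]
      rw [← htr]
      refine build_matrix α β z α (x*y) hdet hp1 ?_
      rw [normSq_mul, ← htdef, hnβ]
      have hexp : normSq α + normSq α = normSq x + normSq y - 2 * K2 := by
        rw [hα]; linarith [hpar]
      nlinarith [hkey, hexp]

/-! #### From a matrix back to `𝓛` -/

private lemma real_back (t r K2 D N sD m : ℝ) (ht0 : 0 < t) (hr0 : 0 ≤ r) (hK20 : 0 ≤ K2)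
    (hDpos : 0 < D) (hsD2 : sD^2 = D) (hsD0 : 0 ≤ sD) (hN0 : 0 ≤ N) (hm0 : 0 ≤ m)
    (htm : t = m^2) (hN2 : N^2 = D + 4*K2)
    (hstar : (K2 - r)^2 < t*(D + 2*K2 - 2*r - t)) :
    2*m < N + sD := by
  have h1 : (r + t - K2)^2 < t*D := by nlinarith [hstar]
  have hsDpos : 0 < sD := by nlinarith
  have hNpos : 0 < N := by nlinarith
  rcases le_or_gt t K2 with hc | hc
  · have h4 : (2*m)^2 < N^2 := by nlinarith
    have := lt_of_pow_lt_pow_left₀ 2 hN0 h4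
    linarith
  · have hrt : 0 < r + t - K2 := by linarith
    have hmsD : 0 ≤ m * sD := mul_nonneg hm0 hsD0
    have h1' : (r + t - K2)^2 < (m*sD)^2 := by nlinarith [h1]
    have h2 : r + t - K2 < m * sD := lt_of_pow_lt_pow_left₀ 2 hmsD h1'
    have hsq : (2*m - sD)^2 < N^2 := by nlinarith [h2]
    have := lt_of_pow_lt_pow_left₀ 2 hN0 hsq
    linarith

private lemma ldom_ineq (α β z δ x y : ℂ)
    (hs : α + δ = x + y) (hp : α * δ - β * z = x * y)
    (hnx : normSq x < 1) (hny : normSq y < 1)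
    (hSig : normSq α + normSq β + normSq z + normSq δ < 1 + normSq (x * y)) :
    2 * ‖z‖ < ‖1 - x * conj y‖ +
      Real.sqrt ((1 - ‖x‖ ^ 2) * (1 - ‖y‖ ^ 2)) := by
  have hnx0 : 0 ≤ normSq x := normSq_nonneg x
  have hny0 : 0 ≤ normSq y := normSq_nonneg y
  have hDpos : 0 < (1 - normSq x) * (1 - normSq y) := by nlinarith
  have hsqarg : (1 - ‖x‖ ^ 2) * (1 - ‖y‖ ^ 2)
      = (1 - normSq x) * (1 - normSq y) := by rw [Complex.sq_norm, Complex.sq_norm]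
  have hsD0 : 0 ≤ Real.sqrt ((1 - ‖x‖ ^ 2) * (1 - ‖y‖ ^ 2)) :=
    Real.sqrt_nonneg _
  have hsD2 : (Real.sqrt ((1 - ‖x‖ ^ 2) * (1 - ‖y‖ ^ 2)))^2
      = (1 - normSq x) * (1 - normSq y) := by
    rw [Real.sq_sqrt (by rw [hsqarg]; exact hDpos.le), hsqarg]
  have hN0 : 0 ≤ ‖1 - x * conj y‖ := norm_nonneg _
  have hpar : normSq x + normSq y
      = 2 * normSq ((x + y)/2) + 2 * normSq ((x - y)/2) := by
    have h := par_law ((x + y)/2) ((x - y)/2)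
    have e1 : (x + y)/2 + (x - y)/2 = x := by ring
    have e2 : (x + y)/2 - (x - y)/2 = y := by ring
    rw [e1, e2] at h
    linarith
  have hN2 : (‖1 - x * conj y‖)^2
      = (1 - normSq x) * (1 - normSq y) + 4 * normSq ((x - y)/2) := by
    rw [Complex.sq_norm, oneSub_mul_conj]
    have h4 : normSq (x - y) = 4 * normSq ((x-y)/2) := by
      rw [show x - y = (2:ℂ) * ((x-y)/2) by ring, normSq_mul]
      norm_num
    rw [h4]
  rcases eq_or_ne z 0 with rfl | hz0
  · simp only [norm_zero, mul_zero]
    have : 0 < Real.sqrt ((1 - ‖x‖ ^ 2) * (1 - ‖y‖ ^ 2)) := by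
      apply Real.sqrt_pos.mpr; rw [hsqarg]; exact hDpos
    linarith
  · have ht0 : 0 < normSq z := normSq_pos.mpr hz0
    have hα : α = (x + y)/2 + (α - δ)/2 := by rw [← hs]; ring
    have hδ : δ = (x + y)/2 - (α - δ)/2 := by rw [← hs]; ring
    have hnαδ : normSq α + normSq δ
        = 2 * normSq ((x + y)/2) + 2 * normSq ((α - δ)/2) := by
      have h := par_law ((x + y)/2) ((α - δ)/2)
      rw [← hα, ← hδ] at h
      linarith
    have hβz : β * z = ((x - y)/2)^2 - ((α - δ)/2)^2 := by
      have e : α * δ = ((x+y)/2)^2 - ((α - δ)/2)^2 := by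
        rw [← hs]; ring
      have e2 : ((x+y)/2)^2 - x*y = ((x-y)/2)^2 := by ring
      have := hp
      rw [e] at this
      linear_combination -this + e2
    have hβn : normSq β * normSq z = normSq (((x - y)/2)^2 - ((α - δ)/2)^2) := by
      rw [← normSq_mul, hβz]
    have habs : |‖((x - y)/2)^2‖ - ‖((α - δ)/2)^2‖|
        ≤ ‖((x - y)/2)^2 - ((α - δ)/2)^2‖ :=
      abs_norm_sub_norm_le _ _
    have habs2 : ‖((x - y)/2)^2‖ = normSq ((x - y)/2) := by
      rw [norm_pow, Complex.sq_norm]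
    have habs3 : ‖((α - δ)/2)^2‖ = normSq ((α - δ)/2) := by
      rw [norm_pow, Complex.sq_norm]
    have hlow : (normSq ((x - y)/2) - normSq ((α - δ)/2))^2
        ≤ normSq (((x - y)/2)^2 - ((α - δ)/2)^2) := by
      rw [← Complex.sq_norm (((x - y)/2)^2 - ((α - δ)/2)^2)]
      rw [habs2, habs3] at habs
      calc (normSq ((x - y)/2) - normSq ((α - δ)/2))^2
          = |normSq ((x - y)/2) - normSq ((α - δ)/2)|^2 := (_root_.sq_abs _).symm
      _ ≤ (‖((x - y)/2)^2 - ((α - δ)/2)^2‖)^2 := by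
          apply pow_le_pow_left₀ (abs_nonneg _) habs
    have hxy : normSq (x*y) = normSq x * normSq y := normSq_mul x y
    have hstar : (normSq ((x - y)/2) - normSq ((α - δ)/2))^2
        < normSq z * ((1 - normSq x) * (1 - normSq y) + 2 * normSq ((x - y)/2)
            - 2 * normSq ((α - δ)/2) - normSq z) := by
      have hβbound : normSq β * normSq z
          < normSq z * ((1 - normSq x) * (1 - normSq y) + 2 * normSq ((x - y)/2)
              - 2 * normSq ((α - δ)/2) - normSq z) := by
        have : normSq β < (1 - normSq x) * (1 - normSq y) + 2 * normSq ((x - y)/2)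
            - 2 * normSq ((α - δ)/2) - normSq z := by nlinarith [hSig, hnαδ, hpar, hxy]
        calc normSq β * normSq z = normSq z * normSq β := mul_comm _ _
        _ < _ := by exact mul_lt_mul_of_pos_left this ht0
      calc (normSq ((x - y)/2) - normSq ((α - δ)/2))^2
          ≤ normSq (((x - y)/2)^2 - ((α - δ)/2)^2) := hlow
      _ = normSq β * normSq z := hβn.symm
      _ < _ := hβbound
    exact real_back (normSq z) (normSq ((α - δ)/2)) (normSq ((x - y)/2))
      ((1 - normSq x) * (1 - normSq y)) (‖1 - x * conj y‖)
      (Real.sqrt ((1 - ‖x‖ ^ 2) * (1 - ‖y‖ ^ 2))) (‖z‖)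
      ht0 (normSq_nonneg _) (normSq_nonneg _) hDpos hsD2 hsD0 hN0 (norm_nonneg _)
      (Complex.sq_norm z).symm hN2 hstar

/-! #### Eigenvalues -/

private lemma eig_abs_lt (a b c d lam : ℂ)
    (h : ∀ v : Fin 2 → ℂ, v ≠ 0 →
      normSq (a * v 0 + b * v 1) + normSq (c * v 0 + d * v 1)
        < normSq (v 0) + normSq (v 1))
    (hroot : lam^2 - (a + d) * lam + (a * d - b * c) = 0) : normSq lam < 1 := by
  have hdet0 : (!![a - lam, b; c, d - lam] : Matrix (Fin 2) (Fin 2) ℂ).det = 0 := by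
    rw [Matrix.det_fin_two_of]
    linear_combination hroot
  obtain ⟨v, hv, hMv⟩ := (Matrix.exists_mulVec_eq_zero_iff).mpr hdet0
  have h0 := congrFun hMv 0
  have h1 := congrFun hMv 1
  simp [Matrix.mulVec, dotProduct, Fin.sum_univ_two] at h0 h1
  have e0 : a * v 0 + b * v 1 = lam * v 0 := by linear_combination h0
  have e1 : c * v 0 + d * v 1 = lam * v 1 := by linear_combination h1
  have hq := h v hv
  rw [e0, e1, normSq_mul, normSq_mul] at hq
  have hvpos : 0 < normSq (v 0) + normSq (v 1) := by
    rcases Function.ne_iff.mp hv with ⟨i, hi⟩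
    fin_cases i
    · have := normSq_pos.mpr (show v 0 ≠ 0 from hi)
      nlinarith [normSq_nonneg (v 1)]
    · have := normSq_pos.mpr (show v 1 ≠ 0 from hi)
      nlinarith [normSq_nonneg (v 0)]
  nlinarith

private lemma exists_roots (s p : ℂ) : ∃ x y : ℂ, x + y = s ∧ x * y = p := by
  obtain ⟨w, hw⟩ := IsAlgClosed.exists_pow_nat_eq (s^2 - 4*p) (n := 2) (by norm_num)
  exact ⟨(s + w)/2, (s - w)/2, by ring, by linear_combination (-1/4 : ℂ) * hw⟩

/-! #### The image identity and symmetry of `𝓛` -/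

private lemma image_eq : PsiMap '' Ldom = Pentablock := by
  apply Set.Subset.antisymm
  · rintro _ ⟨⟨x, y, z⟩, ⟨hx, hy, hz⟩, rfl⟩
    obtain ⟨A, hA, h10, htr, hdet⟩ := mem_penta_of_Ldom hx hy hz
    exact ⟨A, hA, by simp only [PsiMap]; rw [h10, htr, hdet]⟩
  · rintro ⟨a, s, p⟩ ⟨A, hA, heq⟩
    obtain ⟨ha, hs, hp⟩ : a = A 1 0 ∧ s = A.trace ∧ p = A.det := by
      simpa [Prod.ext_iff] using heq
    have hq := (opnorm_lt_one_iff' A).mp hA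
    obtain ⟨x, y, hxy, hxyp⟩ := exists_roots A.trace A.det
    have htr2 : A.trace = A 0 0 + A 1 1 := Matrix.trace_fin_two A
    have hdet2 : A.det = A 0 0 * A 1 1 - A 0 1 * A 1 0 := Matrix.det_fin_two A
    have hrx : x^2 - (A 0 0 + A 1 1) * x + (A 0 0 * A 1 1 - A 0 1 * A 1 0) = 0 := by
      rw [← htr2, ← hdet2, ← hxy, ← hxyp]; ring
    have hry : y^2 - (A 0 0 + A 1 1) * y + (A 0 0 * A 1 1 - A 0 1 * A 1 0) = 0 := by
      rw [← htr2, ← hdet2, ← hxy, ← hxyp]; ring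
    have hnx := eig_abs_lt (A 0 0) (A 0 1) (A 1 0) (A 1 1) x hq hrx
    have hny := eig_abs_lt (A 0 0) (A 0 1) (A 1 0) (A 1 1) y hq hry
    have hax : ‖x‖ < 1 := by
      refine lt_of_pow_lt_pow_left₀ 2 zero_le_one ?_
      rw [Complex.sq_norm, one_pow]; exact hnx
    have hay : ‖y‖ < 1 := by
      refine lt_of_pow_lt_pow_left₀ 2 zero_le_one ?_
      rw [Complex.sq_norm, one_pow]; exact hny
    have hs' : A 0 0 + A 1 1 = x + y := by rw [← htr2, hxy]
    have hp' : A 0 0 * A 1 1 - A 0 1 * A 1 0 = x * y := by rw [← hdet2, hxyp]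
    have hSig := (quad_to_ineqs (A 0 0) (A 0 1) (A 1 0) (A 1 1) hq).2
    rw [hp'] at hSig
    have hineq := ldom_ineq (A 0 0) (A 0 1) (A 1 0) (A 1 1) x y hs' hp' hnx hny hSig
    refine ⟨(x, y, a), ⟨hax, hay, by rw [ha]; exact hineq⟩, ?_⟩
    show ((a, x + y, x * y) : ℂ × ℂ × ℂ) = (a, s, p)
    rw [hxy.trans hs.symm, hxyp.trans hp.symm]

private lemma Ldom_swap {x y z : ℂ} (h : (x, y, z) ∈ Ldom) : (y, x, z) ∈ Ldom := by
  obtain ⟨hx, hy, hz⟩ := h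
  refine ⟨hy, hx, ?_⟩
  have h1 : (1 : ℂ) - y * conj x = conj (1 - x * conj y) := by
    rw [map_sub, map_one, map_mul, Complex.conj_conj]; ring
  show 2 * ‖z‖ < ‖1 - y * conj x‖ +
    Real.sqrt ((1 - ‖y‖ ^ 2) * (1 - ‖x‖ ^ 2))
  rw [h1, Complex.norm_conj, mul_comm (1 - ‖y‖ ^ 2)]
  exact hz

private lemma roots_agree {x y x' y' : ℂ} (hs : x + y = x' + y') (hp : x * y = x' * y') :
    (x = x' ∧ y = y') ∨ (x = y' ∧ y = x') := by
  have h : (x - x') * (x - y') = 0 := by linear_combination x * hs - hp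
  rcases mul_eq_zero.mp h with h1 | h1
  · left
    exact ⟨sub_eq_zero.mp h1, by linear_combination hs - h1⟩
  · right
    exact ⟨sub_eq_zero.mp h1, by linear_combination hs - h1⟩

private lemma preimage_Ldom {p : ℂ × ℂ × ℂ} (h : PsiMap p ∈ Pentablock) : p ∈ Ldom := by
  obtain ⟨x, y, z⟩ := p
  rw [← image_eq] at h
  obtain ⟨⟨x', y', z'⟩, hL, he⟩ := h
  simp only [PsiMap, Prod.mk.injEq] at he
  obtain ⟨hz, hsum, hprod⟩ := he
  subst hz
  rcases roots_agree hsum hprod with ⟨h1, h2⟩ | ⟨h1, h2⟩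
  · subst h1; subst h2; exact hL
  · subst h1; subst h2; exact Ldom_swap hL

private lemma Ldom_bounded : Bornology.IsBounded Ldom := by
  apply (Metric.isBounded_closedBall (x := (0 : ℂ × ℂ × ℂ)) (r := 2)).subset
  rintro ⟨x, y, z⟩ ⟨hx, hy, hz⟩
  rw [Metric.mem_closedBall, dist_zero_right]
  have hax : ‖x‖ < 1 := hx
  have hay : ‖y‖ < 1 := hy
  have hN : ‖1 - x * conj y‖ ≤ 2 := by
    calc ‖1 - x * conj y‖
        ≤ ‖1‖ + ‖x * conj y‖ := norm_sub_le _ _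
    _ = 1 + ‖x‖ * ‖y‖ := by
        rw [norm_one, norm_mul, Complex.norm_conj]
    _ ≤ 2 := by nlinarith [norm_nonneg x, norm_nonneg y]
  have hsD : Real.sqrt ((1 - ‖x‖ ^ 2) * (1 - ‖y‖ ^ 2)) ≤ 1 := by
    have hx2 : ‖x‖ ^ 2 ≤ 1 := by nlinarith [norm_nonneg x]
    have hy2 : ‖y‖ ^ 2 ≤ 1 := by nlinarith [norm_nonneg y]
    have h1 : (1 - ‖x‖ ^ 2) * (1 - ‖y‖ ^ 2) ≤ 1 := by
      nlinarith [mul_nonneg (sq_nonneg (‖x‖)) (by linarith : (0:ℝ) ≤ 1 - ‖y‖ ^ 2),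
        sq_nonneg (‖y‖)]
    have h2 := Real.sqrt_le_sqrt h1
    rwa [Real.sqrt_one] at h2
  have hz2 : ‖z‖ ≤ 2 := by nlinarith
  have : ‖((x, y, z) : ℂ × ℂ × ℂ)‖ = max ‖x‖ (max ‖y‖ ‖z‖) := rfl
  rw [this]
  apply max_le
  · linarith
  · apply max_le
    · linarith
    · linarith

/-! #### The derivative -/

private def psiDeriv (p : ℂ × ℂ × ℂ) : (ℂ × ℂ × ℂ) →L[ℂ] (ℂ × ℂ × ℂ) :=
  ((ContinuousLinearMap.snd ℂ ℂ ℂ).comp (ContinuousLinearMap.snd ℂ ℂ (ℂ × ℂ))).prod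
    (((ContinuousLinearMap.fst ℂ ℂ (ℂ × ℂ))
        + ((ContinuousLinearMap.fst ℂ ℂ ℂ).comp (ContinuousLinearMap.snd ℂ ℂ (ℂ × ℂ)))).prod
      (p.1 • ((ContinuousLinearMap.fst ℂ ℂ ℂ).comp (ContinuousLinearMap.snd ℂ ℂ (ℂ × ℂ)))
        + p.2.1 • (ContinuousLinearMap.fst ℂ ℂ (ℂ × ℂ))))

private lemma hasFDeriv_psi (p : ℂ × ℂ × ℂ) : HasFDerivAt PsiMap (psiDeriv p) p := by
  have h1 : HasFDerivAt (fun q : ℂ × ℂ × ℂ => q.2.2)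
      ((ContinuousLinearMap.snd ℂ ℂ ℂ).comp (ContinuousLinearMap.snd ℂ ℂ (ℂ × ℂ))) p :=
    (hasFDerivAt_snd).comp p hasFDerivAt_snd
  have h2 : HasFDerivAt (fun q : ℂ × ℂ × ℂ => q.1 + q.2.1)
      ((ContinuousLinearMap.fst ℂ ℂ (ℂ × ℂ))
        + ((ContinuousLinearMap.fst ℂ ℂ ℂ).comp (ContinuousLinearMap.snd ℂ ℂ (ℂ × ℂ)))) p :=
    (hasFDerivAt_fst).add ((hasFDerivAt_fst).comp p hasFDerivAt_snd)
  have h3 : HasFDerivAt (fun q : ℂ × ℂ × ℂ => q.1 * q.2.1)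
      (p.1 • ((ContinuousLinearMap.fst ℂ ℂ ℂ).comp (ContinuousLinearMap.snd ℂ ℂ (ℂ × ℂ)))
        + p.2.1 • (ContinuousLinearMap.fst ℂ ℂ (ℂ × ℂ))) p :=
    (hasFDerivAt_fst).mul ((hasFDerivAt_fst).comp p hasFDerivAt_snd)
  exact h1.prodMk (h2.prodMk h3)

private def fwd3 : (Fin 3 → ℂ) →ₗ[ℂ] ℂ × ℂ × ℂ :=
  (LinearMap.proj 0).prod ((LinearMap.proj 1).prod (LinearMap.proj 2))

private def bwd3 : (ℂ × ℂ × ℂ) →ₗ[ℂ] (Fin 3 → ℂ) :=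
  LinearMap.pi (fun i =>
    ![LinearMap.fst ℂ ℂ (ℂ × ℂ),
      (LinearMap.fst ℂ ℂ ℂ).comp (LinearMap.snd ℂ ℂ (ℂ × ℂ)),
      (LinearMap.snd ℂ ℂ ℂ).comp (LinearMap.snd ℂ ℂ (ℂ × ℂ))] i)

private def tripleEquiv : (Fin 3 → ℂ) ≃ₗ[ℂ] ℂ × ℂ × ℂ :=
  LinearEquiv.ofLinear fwd3 bwd3
    (by ext q <;> simp [fwd3, bwd3])
    (by ext v i; fin_cases i <;> simp [fwd3, bwd3])

private lemma psi_det (p : ℂ × ℂ × ℂ) : (psiDeriv p).det = p.1 - p.2.1 := by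
  have key : ((psiDeriv p) : (ℂ × ℂ × ℂ) →ₗ[ℂ] (ℂ × ℂ × ℂ)).det
      = LinearMap.det ((tripleEquiv.symm : (ℂ × ℂ × ℂ) →ₗ[ℂ] (Fin 3 → ℂ)).comp
          (((psiDeriv p) : (ℂ × ℂ × ℂ) →ₗ[ℂ] (ℂ × ℂ × ℂ)).comp
            (tripleEquiv : (Fin 3 → ℂ) →ₗ[ℂ] ℂ × ℂ × ℂ))) := by
    rw [← LinearMap.det_conj (((psiDeriv p) : (ℂ × ℂ × ℂ) →ₗ[ℂ] (ℂ × ℂ × ℂ))) tripleEquiv.symm]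
    rfl
  rw [ContinuousLinearMap.det, key, ← LinearMap.det_toMatrix']
  have hM : (LinearMap.toMatrix' ((tripleEquiv.symm : (ℂ × ℂ × ℂ) →ₗ[ℂ] (Fin 3 → ℂ)).comp
      (((psiDeriv p) : (ℂ × ℂ × ℂ) →ₗ[ℂ] (ℂ × ℂ × ℂ)).comp
        (tripleEquiv : (Fin 3 → ℂ) →ₗ[ℂ] ℂ × ℂ × ℂ))))
      = !![0, 0, 1; 1, 1, 0; p.2.1, p.1, 0] := by
    ext i j
    fin_cases i <;> fin_cases j <;>
      simp [LinearMap.toMatrix'_apply, tripleEquiv, fwd3, bwd3, psiDeriv, Pi.single_apply,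
        LinearEquiv.ofLinear_symm_apply, Matrix.vecHead, Matrix.vecTail]
  rw [hM, Matrix.det_fin_three]
  simp

end Stmt15Aux

open Stmt15Aux in
/-- `Ψ : 𝓛 → 𝒫` is a proper holomorphic surjection of multiplicity two whose Jacobian
determinant is the degree-one homogeneous polynomial `x - y`. -/
theorem stmt15 :
    Differentiable ℂ PsiMap ∧
    PsiMap '' Ldom = Pentablock ∧
    (∀ K ⊆ Pentablock, IsCompact K → IsCompact (Ldom ∩ PsiMap ⁻¹' K)) ∧
    (∀ w ∈ Pentablock, w.2.1 ^ 2 ≠ 4 * w.2.2 → (Ldom ∩ PsiMap ⁻¹' {w}).ncard = 2) ∧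
    (∀ p : ℂ × ℂ × ℂ, (fderiv ℂ PsiMap p).det = p.1 - p.2.1) := by
  have hdiff : Differentiable ℂ PsiMap := fun p => (hasFDeriv_psi p).differentiableAt
  refine ⟨hdiff, image_eq, ?_, ?_, ?_⟩
  · -- properness
    intro K hK hKc
    have hsub : PsiMap ⁻¹' K ⊆ Ldom := fun p hp => preimage_Ldom (hK hp)
    have heq : Ldom ∩ PsiMap ⁻¹' K = PsiMap ⁻¹' K :=
      Set.inter_eq_self_of_subset_right hsub
    rw [heq, Metric.isCompact_iff_isClosed_bounded]
    exact ⟨hKc.isClosed.preimage hdiff.continuous, Ldom_bounded.subset hsub⟩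
  · -- multiplicity two
    intro w hw hne
    rw [← image_eq] at hw
    obtain ⟨⟨x, y, z⟩, hq, hqw⟩ := hw
    have hxy : x ≠ y := by
      intro h
      apply hne
      rw [← hqw]
      simp only [PsiMap]
      rw [h]; ring
    have hset : Ldom ∩ PsiMap ⁻¹' {w} = {(x, y, z), (y, x, z)} := by
      ext ⟨a, b, c⟩
      constructor
      · rintro ⟨hL, hmem⟩
        have hΨ : PsiMap (a, b, c) = w := hmem
        rw [← hqw] at hΨ
        simp only [PsiMap, Prod.mk.injEq] at hΨ
        obtain ⟨h1, h2, h3⟩ := hΨ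
        rcases roots_agree h2 h3 with ⟨rfl, rfl⟩ | ⟨rfl, rfl⟩ <;> simp [h1]
      · rintro (h | h)
        · rw [h]
          exact ⟨hq, by rw [Set.mem_preimage, hqw]; rfl⟩
        · rw [h]
          refine ⟨Ldom_swap hq, ?_⟩
          rw [Set.mem_preimage, ← hqw]
          have : PsiMap (y, x, z) = PsiMap (x, y, z) := by
            show ((z, y + x, y * x) : ℂ × ℂ × ℂ) = (z, x + y, x * y)
            rw [add_comm, mul_comm]
          rw [this]; rfl
    rw [hset]
    apply Set.ncard_pair
    intro h
    exact hxy (congrArg Prod.fst h)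
  · -- the Jacobian determinant
    intro p
    rw [(hasFDeriv_psi p).fderiv]
    exact psi_det p
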